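/- A symmetric polynomial f(x₁,...,xₙ) in n variables of total degree strictly less than n is uniquely determined by the evaluation of one variable at any fixed a: if f and g are symmetric of degree < n and f(x₁,...,x_{n−1},a) = g(x₁,...,x_{n−1},a) for all x₁,...,x_{n−1}, then f = g. -/

import Mathlib

open MvPolynomial

lemma stmt12_totalDegree_X_mul {n : ℕ} (i : Fin n) (q : MvPolynomial (Fin n) ℂ) (hq : q ≠ 0) :
    (X i * q).totalDegree = q.totalDegree + 1 := by
  apply le_antisymm
  · calc (X i * q).totalDegree ≤ (X i : MvPolynomial (Fin n) ℂ).totalDegree + q.totalDegree :=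
        totalDegree_mul _ _
      _ = q.totalDegree + 1 := by rw [totalDegree_X]; ring
  · -- pick a monomial of maximal degree in q
    have hsupp : q.support.Nonempty := by
      rwa [Finset.nonempty_iff_ne_empty, Ne, MvPolynomial.support_eq_empty]
    obtain ⟨s, hs, hdeg⟩ := Finset.exists_mem_eq_sup q.support hsupp
      (fun m => m.sum fun _ e => e)
    have hmem : Finsupp.single i 1 + s ∈ (X i * q).support := by
      rw [support_X_mul, Finset.mem_map]
      exact ⟨s, hs, rfl⟩
    have := le_totalDegree hmem
    have hsum : ((Finsupp.single i 1 + s).sum fun _ e => e) = 1 + (s.sum fun _ e => e) := by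
      rw [Finsupp.sum_add_index' (fun _ => rfl) (fun _ _ _ => rfl)]
      simp [Finsupp.sum_single_index]
    rw [hsum] at this
    have hq' : q.totalDegree = s.sum fun _ e => e := by
      rw [MvPolynomial.totalDegree, hdeg]
    omega

lemma stmt12_totalDegree_lin_mul {n : ℕ} (i : Fin n) (a : ℂ) (q : MvPolynomial (Fin n) ℂ)
    (hq : q ≠ 0) : ((X i - C a) * q).totalDegree = q.totalDegree + 1 := by
  have h1 : (X i - C a) * q = X i * q + (-(C a * q)) := by ring
  rw [h1]
  rcases eq_or_ne a 0 with rfl | ha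
  · simp [stmt12_totalDegree_X_mul i q hq]
  · have h2 : (-(C a * q)).totalDegree < (X i * q).totalDegree := by
      rw [totalDegree_neg, stmt12_totalDegree_X_mul i q hq]
      calc (C a * q).totalDegree ≤ (C a : MvPolynomial (Fin n) ℂ).totalDegree + q.totalDegree :=
          totalDegree_mul _ _
        _ = q.totalDegree := by rw [totalDegree_C, zero_add]
        _ < q.totalDegree + 1 := Nat.lt_succ_self _
    rw [totalDegree_add_eq_left_of_totalDegree_lt h2, stmt12_totalDegree_X_mul i q hq]

/-- A symmetric polynomial in `n` variables of total degree `< n` is uniquely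
determined by fixing one variable at any value `a`: if `f, g` are symmetric of
total degree `< n` and agree whenever the last variable equals `a`, then `f = g`. -/
theorem stmt12 (m : ℕ) (f g : MvPolynomial (Fin (m + 1)) ℂ)
    (hf : f.IsSymmetric) (hg : g.IsSymmetric)
    (hdf : f.totalDegree < m + 1) (hdg : g.totalDegree < m + 1) (a : ℂ)
    (h : ∀ x : Fin (m + 1) → ℂ, x (Fin.last m) = a →
      MvPolynomial.eval x f = MvPolynomial.eval x g) :
    f = g := by
  set d := f - g with hd_def
  have hd : d.IsSymmetric := hf.sub hg
  -- Step A: d vanishes whenever any coordinate equals a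
  have hd0 : ∀ (i : Fin (m + 1)) (x : Fin (m + 1) → ℂ), x i = a → eval x d = 0 := by
    intro i x hx
    set σ := Equiv.swap i (Fin.last m) with hσ
    have h1 : eval x d = eval (x ∘ σ) d := by
      conv_lhs => rw [← hd σ]
      rw [eval_rename]
    have hlast : (x ∘ σ) (Fin.last m) = a := by
      simp [Function.comp, hσ, Equiv.swap_apply_right, hx]
    rw [h1, hd_def, map_sub, h (x ∘ σ) hlast, sub_self]
  -- Step B: X i - C a divides d for each i
  have hdvd : ∀ i : Fin (m + 1), (X i - C a) ∣ d := by
    intro i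
    set σ := Equiv.swap (0 : Fin (m + 1)) i with hσ
    set d' := rename σ d with hd'
    set P := finSuccEquiv ℂ m d' with hP
    have hroot : Polynomial.eval (C a : MvPolynomial (Fin m) ℂ) P = 0 := by
      apply MvPolynomial.funext (q := 0)
      intro s
      have h1 : eval (Fin.cons a s : Fin (m + 1) → ℂ) d' = 0 := by
        rw [hd', eval_rename]
        apply hd0 i
        have : σ i = 0 := Equiv.swap_apply_right 0 i
        simp [Function.comp, this]
      rw [eval_eq_eval_mv_eval'] at h1
      have h2 : Polynomial.eval a (Polynomial.map (eval s) P)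
          = eval s (Polynomial.eval (C a) P) := by
        rw [Polynomial.eval_map]
        have := Polynomial.eval₂_hom (eval s : MvPolynomial (Fin m) ℂ →+* ℂ) (C a) (p := P)
        simpa using this
      rw [h2] at h1
      simpa using h1
    have hdvd1 : (Polynomial.X - Polynomial.C (C a)) ∣ P :=
      Polynomial.dvd_iff_isRoot.mpr hroot
    have hdvd2 : (X 0 - C a : MvPolynomial (Fin (m + 1)) ℂ) ∣ d' := by
      have h3 := map_dvd (finSuccEquiv ℂ m).symm hdvd1
      have hX : (finSuccEquiv ℂ m).symm Polynomial.X = X 0 :=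
        (AlgEquiv.symm_apply_eq _).mpr finSuccEquiv_X_zero.symm
      have hC : (finSuccEquiv ℂ m).symm (Polynomial.C (C a)) = C a := by
        have := RingHom.congr_fun (finSuccEquiv_comp_C_eq_C (R := ℂ) m) a
        simpa using this
      rwa [map_sub, hX, hC, hP, AlgEquiv.symm_apply_apply] at h3
    have h4 := map_dvd (rename (σ : Fin (m + 1) → Fin (m + 1))) hdvd2
    have hren : rename (σ : Fin (m + 1) → Fin (m + 1)) d' = d := by
      rw [hd', rename_rename]
      have : (σ : Fin (m + 1) → Fin (m + 1)) ∘ σ = id := by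
        funext x; exact Equiv.swap_apply_self 0 i x
      rw [this, rename_id, AlgHom.id_apply]
    have hXi : rename (σ : Fin (m + 1) → Fin (m + 1)) (X 0 - C a) = X i - C a := by
      rw [map_sub, rename_X, rename_C, Equiv.swap_apply_left]
    rwa [hren, hXi] at h4
  -- Step C: each X i - C a is prime
  have hprime : ∀ i : Fin (m + 1), Prime (X i - C a : MvPolynomial (Fin (m + 1)) ℂ) := by
    have h0 : Prime (X 0 - C a : MvPolynomial (Fin (m + 1)) ℂ) := by
      rw [← MulEquiv.prime_iff (finSuccEquiv ℂ m).toMulEquiv]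
      have : (finSuccEquiv ℂ m).toMulEquiv (X 0 - C a)
          = Polynomial.X - Polynomial.C (C a) := by
        show finSuccEquiv ℂ m (X 0 - C a) = _
        rw [map_sub, finSuccEquiv_X_zero]
        congr 1
        have h5 : (finSuccEquiv ℂ m).symm (Polynomial.C (C a)) = C a := by
          have := RingHom.congr_fun (finSuccEquiv_comp_C_eq_C (R := ℂ) m) a
          simpa using this
        rw [← h5, AlgEquiv.apply_symm_apply]
      rw [this]
      exact Polynomial.prime_X_sub_C (C a)
    intro i
    have := (MulEquiv.prime_iff
      (renameEquiv ℂ (Equiv.swap (0 : Fin (m + 1)) i)).toMulEquiv).mpr h0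
    have heq : (renameEquiv ℂ (Equiv.swap (0 : Fin (m + 1)) i)).toMulEquiv (X 0 - C a)
        = X i - C a := by
      show rename _ (X 0 - C a) = _
      rw [map_sub, rename_X, rename_C, Equiv.swap_apply_left]
    rwa [heq] at this
  -- Step D: the factors don't divide each other
  have hnondvd : ∀ i j : Fin (m + 1), i ≠ j →
      ¬ ((X i - C a : MvPolynomial (Fin (m + 1)) ℂ) ∣ X j - C a) := by
    rintro i j hij ⟨c, hc⟩
    have := congrArg (eval (Function.update (fun _ => a) j (a + 1))) hc
    simp [Function.update_apply, hij.symm] at this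
    rw [if_neg hij] at this
    simp at this
  -- Step E: the product over any finset divides d
  have hproddvd : ∀ s : Finset (Fin (m + 1)), (∏ i ∈ s, (X i - C a)) ∣ d := by
    intro s
    induction s using Finset.induction_on with
    | empty => simp
    | @insert i s hi ih =>
      rw [Finset.prod_insert hi]
      obtain ⟨q, hq⟩ := ih
      have h1 : (X i - C a) ∣ (∏ j ∈ s, (X j - C a)) * q := hq ▸ hdvd i
      have hpq : (X i - C a) ∣ q := by
        rcases (hprime i).dvd_or_dvd h1 with h2 | h2
        · exfalso
          obtain ⟨j, hj, hj2⟩ := ((hprime i).dvd_finset_prod_iff _).mp h2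
          exact hnondvd i j (fun hij => hi (hij ▸ hj)) hj2
        · exact h2
      obtain ⟨q', hq'⟩ := hpq
      exact ⟨q', by rw [hq, hq']; ring⟩
  -- Step F: degree count
  have hfac_ne : ∀ i : Fin (m + 1), (X i - C a : MvPolynomial (Fin (m + 1)) ℂ) ≠ 0 :=
    fun i => (hprime i).ne_zero
  have hdeg : ∀ (s : Finset (Fin (m + 1))) (c : MvPolynomial (Fin (m + 1)) ℂ), c ≠ 0 →
      ((∏ i ∈ s, (X i - C a)) * c).totalDegree = s.card + c.totalDegree := by
    intro s
    induction s using Finset.induction_on with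
    | empty => intro c hc; simp
    | @insert i s hi ih =>
      intro c hc
      have hprod_ne : (∏ j ∈ s, (X j - C a) : MvPolynomial (Fin (m + 1)) ℂ) ≠ 0 :=
        Finset.prod_ne_zero_iff.mpr fun j _ => hfac_ne j
      have hqc : (∏ j ∈ s, (X j - C a)) * c ≠ 0 := mul_ne_zero hprod_ne hc
      rw [Finset.prod_insert hi, mul_assoc, stmt12_totalDegree_lin_mul i a _ hqc, ih c hc,
        Finset.card_insert_of_notMem hi]
      ring
  -- conclude
  by_contra hne
  have hdne : d ≠ 0 := sub_ne_zero_of_ne hne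
  obtain ⟨c, hc⟩ := hproddvd Finset.univ
  have hcne : c ≠ 0 := by
    rintro rfl
    rw [mul_zero] at hc
    exact hdne hc
  have hdd : d.totalDegree < m + 1 :=
    lt_of_le_of_lt (totalDegree_sub f g) (max_lt hdf hdg)
  have := hdeg Finset.univ c hcne
  rw [← hc] at this
  simp [Finset.card_univ] at this
  omega
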